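/- Let T ∈ (0,∞], let F : [0,T) → ℝ be continuous, and let φ : [0,T) → ℝ be C² with φ(t) > 0 for all t and φ''(t) = F(t) φ(t) on [0,T). Suppose f : [0,T) → ℝ is nonnegative, differentiable, and nondecreasing with F(t) ≤ f(t)² for all t ∈ [0,T). Then there exists a constant C such that φ'(t)/φ(t) ≤ C + f(t) for all t ∈ [0,T); indeed φ'(t)/φ(t) ≤ max{φ'(0)/φ(0), f(t)} for all t ∈ [0,T). -/

import Mathlib

open Set

/-- Riccati comparison bound for the logarithmic derivative of a positive
solution of φ'' = Fφ when F ≤ f². -/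
theorem stmt_7 (T : EReal) (hT : 0 < T)
    (J : Set ℝ) (hJ : J = {t : ℝ | 0 ≤ t ∧ (t : EReal) < T})
    (F φ φ' f : ℝ → ℝ)
    (hF : ContinuousOn F J)
    (hφpos : ∀ t ∈ J, 0 < φ t)
    (hφ : ∀ t ∈ J, HasDerivWithinAt φ (φ' t) J t)
    (hφ' : ∀ t ∈ J, HasDerivWithinAt φ' (F t * φ t) J t)
    (hf0 : ∀ t ∈ J, 0 ≤ f t)
    (hfdiff : ∀ t ∈ J, DifferentiableWithinAt ℝ f J t)
    (hfmono : MonotoneOn f J)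
    (hFf : ∀ t ∈ J, F t ≤ f t ^ 2) :
    (∃ C : ℝ, ∀ t ∈ J, φ' t / φ t ≤ C + f t) ∧
    (∀ t ∈ J, φ' t / φ t ≤ max (φ' 0 / φ 0) (f t)) := by
  have h0J : (0:ℝ) ∈ J := by
    rw [hJ]
    refine ⟨le_refl 0, ?_⟩
    exact_mod_cast hT
  have hJnhds : ∀ x : ℝ, 0 < x → (x : EReal) < T → J ∈ nhds x := by
    intro x hx hxT
    have hopen : IsOpen {t : ℝ | 0 < t ∧ (t : EReal) < T} := by
      have he : {t : ℝ | 0 < t ∧ (t : EReal) < T}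
          = Ioi 0 ∩ (fun t : ℝ => (t : EReal)) ⁻¹' Iio T := rfl
      rw [he]
      exact isOpen_Ioi.inter (isOpen_Iio.preimage continuous_coe_real_ereal)
    refine Filter.mem_of_superset (hopen.mem_nhds ⟨hx, hxT⟩) ?_
    intro t ht
    rw [hJ]
    exact ⟨le_of_lt ht.1, ht.2⟩
  have main : ∀ t₁ ∈ J, φ' t₁ / φ t₁ ≤ max (φ' 0 / φ 0) (f t₁) := by
    intro t₁ ht₁
    have ht₁' : 0 ≤ t₁ ∧ (t₁ : EReal) < T := by rw [hJ] at ht₁; exact ht₁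
    set M : ℝ := max (φ' 0 / φ 0) (f t₁) with hM
    have hfM : f t₁ ≤ M := le_max_right _ _
    have hM0 : 0 ≤ M := le_trans (hf0 t₁ ht₁) hfM
    have hIcc : Icc 0 t₁ ⊆ J := by
      intro t ht
      rw [hJ]
      refine ⟨ht.1, lt_of_le_of_lt ?_ ht₁'.2⟩
      exact_mod_cast ht.2
    set u : ℝ → ℝ := fun t => Real.exp (M * t) * (φ' t - M * φ t) with hu
    have hderiv : ∀ t ∈ J, HasDerivWithinAt u
        (Real.exp (M * t) * ((F t - M ^ 2) * φ t)) J t := by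
      intro t ht
      have h1 : HasDerivWithinAt (fun t => Real.exp (M * t))
          (Real.exp (M * t) * M) J t := by
        have := (((hasDerivAt_id t).const_mul M).exp).hasDerivWithinAt (s := J)
        simpa using this
      have h2 : HasDerivWithinAt (fun t => φ' t - M * φ t)
          (F t * φ t - M * φ' t) J t := (hφ' t ht).sub ((hφ t ht).const_mul M)
      have : HasDerivWithinAt (fun y => Real.exp (M * y) * (φ' y - M * φ y)) _ J t := h1.mul h2
      convert this using 1
      ring
    have hnonpos : ∀ t ∈ Icc (0:ℝ) t₁, F t - M ^ 2 ≤ 0 := by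
      intro t ht
      have htJ := hIcc ht
      have h1 : f t ≤ f t₁ := hfmono htJ ht₁ ht.2
      have h2 : f t ^ 2 ≤ f t₁ ^ 2 := pow_le_pow_left₀ (hf0 t htJ) h1 2
      have h3 : f t₁ ^ 2 ≤ M ^ 2 := pow_le_pow_left₀ (hf0 t₁ ht₁) hfM 2
      have := hFf t htJ
      linarith
    have hcont : ContinuousOn u (Icc 0 t₁) := by
      intro t ht
      exact ((hderiv t (hIcc ht)).continuousWithinAt).mono hIcc
    have hderivAt : ∀ x ∈ interior (Icc (0:ℝ) t₁),
        HasDerivAt u (Real.exp (M * x) * ((F x - M ^ 2) * φ x)) x := by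
      intro x hx
      rw [interior_Icc] at hx
      have hxJ : x ∈ J := hIcc ⟨le_of_lt hx.1, le_of_lt hx.2⟩
      have hxT : (x : EReal) < T := by rw [hJ] at hxJ; exact hxJ.2
      exact (hderiv x hxJ).hasDerivAt (hJnhds x hx.1 hxT)
    have hanti : AntitoneOn u (Icc 0 t₁) := by
      apply antitoneOn_of_deriv_nonpos (convex_Icc 0 t₁) hcont
      · intro x hx
        exact (hderivAt x hx).differentiableAt.differentiableWithinAt
      · intro x hx
        rw [(hderivAt x hx).deriv]
        have h1 := hnonpos x (interior_subset hx)
        have h2 := hφpos x (hIcc (interior_subset hx))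
        have h3 : (F x - M ^ 2) * φ x ≤ 0 :=
          mul_nonpos_iff.mpr (Or.inr ⟨h1, h2.le⟩)
        exact mul_nonpos_iff.mpr (Or.inl ⟨(Real.exp_pos _).le, h3⟩)
    have hu0 : u 0 ≤ 0 := by
      have hφ0 := hφpos 0 h0J
      have : φ' 0 / φ 0 ≤ M := le_max_left _ _
      rw [div_le_iff₀ hφ0] at this
      simp only [hu, mul_zero, Real.exp_zero, one_mul]
      linarith
    have hle : u t₁ ≤ u 0 :=
      hanti (left_mem_Icc.mpr ht₁'.1) (right_mem_Icc.mpr ht₁'.1) ht₁'.1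
    have hut : φ' t₁ - M * φ t₁ ≤ 0 := by
      have hE := Real.exp_pos (M * t₁)
      have h4 := hle.trans hu0
      simp only [hu] at h4
      nlinarith
    rw [div_le_iff₀ (hφpos t₁ ht₁)]
    linarith
  constructor
  · refine ⟨max (φ' 0 / φ 0) 0, fun t ht => ?_⟩
    have h1 := main t ht
    have h2 : max (φ' 0 / φ 0) (f t) ≤ max (φ' 0 / φ 0) 0 + f t := by
      apply max_le
      · exact le_add_of_le_of_nonneg (le_max_left _ _) (hf0 t ht)
      · exact le_add_of_nonneg_left (le_max_right _ _)
    linarith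
  · exact main
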